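/- The Lie algebra A_{3,5}^0 is a contraction of su(2); an explicit contraction is given by the maps C_r = diag(r, r, 1) as r → 0+. -/

import Mathlib

open Filter Topology

/-- `bg₀` (a bracket on `W`) is a contraction of `bg` (a bracket on `V`). -/
def IsContractionOf {V W : Type*} [AddCommGroup V] [Module ℝ V]
    [AddCommGroup W] [Module ℝ W] [TopologicalSpace W]
    (bg : V → V → V) (bg₀ : W → W → W) : Prop :=
  ∃ I : Set ℝ, (𝓝[I \ {0}] (0 : ℝ)).NeBot ∧
    ∃ C : ℝ → (W ≃ₗ[ℝ] V), ∀ x y : W,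
      Tendsto (fun r => (C r).symm (bg (C r x) (C r y))) (𝓝[I \ {0}] (0 : ℝ)) (𝓝 (bg₀ x y))

/-- The bracket of `su(2)` on `Fin 3 → ℝ`: `[e₁,e₂] = e₃`, `[e₂,e₃] = e₁`, `[e₃,e₁] = e₂`. -/
def su2Bracket (x y : Fin 3 → ℝ) : Fin 3 → ℝ :=
  ![x 1 * y 2 - x 2 * y 1, x 2 * y 0 - x 0 * y 2, x 0 * y 1 - x 1 * y 0]

/-- The bracket of `A_{3,5}^0` on `Fin 3 → ℝ`: `[e₁,e₃] = -e₂`, `[e₂,e₃] = e₁`. -/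
def a350Bracket (x y : Fin 3 → ℝ) : Fin 3 → ℝ :=
  ![x 1 * y 2 - x 2 * y 1, -(x 0 * y 2 - x 2 * y 0), 0]

/-- The contraction maps `C_r = diag(r, r, 1)` (the identity for `r = 0`). -/
noncomputable def Cmap (r : ℝ) : (Fin 3 → ℝ) ≃ₗ[ℝ] (Fin 3 → ℝ) :=
  if h : r ≠ 0 then
    LinearEquiv.piCongrRight (fun i => LinearEquiv.smulOfNeZero ℝ ℝ (![r, r, 1] i)
      (by fin_cases i <;> simp [h]))
  else LinearEquiv.refl ℝ _

lemma Cmap_apply (r : ℝ) (h : r ≠ 0) (x : Fin 3 → ℝ) :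
    Cmap r x = fun j => ![r, r, 1] j * x j := by
  simp only [Cmap, dif_pos h]
  ext j
  rw [LinearEquiv.piCongrRight_apply]
  simp [smul_eq_mul]

lemma Cmap_symm_apply (r : ℝ) (h : r ≠ 0) (x : Fin 3 → ℝ) :
    (Cmap r).symm x = fun j => ![r⁻¹, r⁻¹, 1] j * x j := by
  simp only [Cmap, dif_pos h]
  ext j
  rw [LinearEquiv.piCongrRight_symm, LinearEquiv.piCongrRight_apply,
    LinearEquiv.symm_apply_eq]
  fin_cases j <;> simp [smul_eq_mul] <;> field_simp

lemma key_tendsto (x y : Fin 3 → ℝ) :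
    Tendsto (fun r : ℝ => fun i =>
        (![r⁻¹, r⁻¹, 1] : Fin 3 → ℝ) i *
          su2Bracket (fun j => ![r, r, 1] j * x j) (fun j => ![r, r, 1] j * y j) i)
      (𝓝[>] (0 : ℝ)) (𝓝 (a350Bracket x y)) := by
  rw [tendsto_pi_nhds]
  intro i
  fin_cases i
  · have : Tendsto (fun _ : ℝ => a350Bracket x y 0) (𝓝[>] (0 : ℝ)) (𝓝 (a350Bracket x y 0)) :=
      tendsto_const_nhds
    refine this.congr' ?_
    filter_upwards [self_mem_nhdsWithin] with r (hr : 0 < r)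
    have h : r ≠ 0 := ne_of_gt hr
    simp only [su2Bracket, a350Bracket]
    simp only [Fin.zero_eta, Fin.mk_one, Fin.isValue, Matrix.cons_val_zero, Matrix.cons_val_one, Matrix.head_cons,
      Matrix.cons_val_two, Matrix.tail_cons]
    field_simp
  · have : Tendsto (fun _ : ℝ => a350Bracket x y 1) (𝓝[>] (0 : ℝ)) (𝓝 (a350Bracket x y 1)) :=
      tendsto_const_nhds
    refine this.congr' ?_
    filter_upwards [self_mem_nhdsWithin] with r (hr : 0 < r)
    have h : r ≠ 0 := ne_of_gt hr
    simp only [su2Bracket, a350Bracket]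
    simp only [Fin.zero_eta, Fin.mk_one, Fin.isValue, Matrix.cons_val_zero, Matrix.cons_val_one, Matrix.head_cons,
      Matrix.cons_val_two, Matrix.tail_cons]
    field_simp
    ring
  · have hc : Continuous (fun r : ℝ =>
        (![r⁻¹, r⁻¹, 1] : Fin 3 → ℝ) 2 *
          su2Bracket (fun j => ![r, r, 1] j * x j) (fun j => ![r, r, 1] j * y j) 2) := by
      simp only [su2Bracket]
      simp only [Matrix.cons_val_zero, Matrix.cons_val_one, Matrix.head_cons,
        Matrix.cons_val_two, Matrix.tail_cons]
      fun_prop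
    have := (hc.tendsto 0).mono_left (nhdsWithin_le_nhds : 𝓝[>] (0:ℝ) ≤ 𝓝 0)
    convert this using 2
    all_goals simp [su2Bracket, a350Bracket, Fin.reduceFinMk]

/-- `A_{3,5}^0` is a contraction of `su(2)`; an explicit contraction is given by the
maps `C_r = diag(r, r, 1)` as `r → 0+`. -/
theorem a350_isContractionOf_su2 :
    (∀ x y : Fin 3 → ℝ,
      Tendsto (fun r : ℝ => fun i =>
          (![r⁻¹, r⁻¹, 1] : Fin 3 → ℝ) i *
            su2Bracket (fun j => ![r, r, 1] j * x j) (fun j => ![r, r, 1] j * y j) i)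
        (𝓝[>] (0 : ℝ)) (𝓝 (a350Bracket x y))) ∧
    IsContractionOf su2Bracket a350Bracket := by
  constructor
  · exact key_tendsto
  · refine ⟨Set.Ioi 0, ?_, Cmap, ?_⟩
    · have : Set.Ioi (0 : ℝ) \ {0} = Set.Ioi 0 := by
        ext r; simp
      rw [this]
      exact nhdsGT_neBot 0
    · intro x y
      have h1 : Set.Ioi (0 : ℝ) \ {0} = Set.Ioi 0 := by
        ext r; simp
      rw [h1]
      refine (key_tendsto x y).congr' ?_
      filter_upwards [self_mem_nhdsWithin] with r (hr : 0 < r)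
      have h : r ≠ 0 := ne_of_gt hr
      rw [Cmap_apply r h, Cmap_apply r h, Cmap_symm_apply r h]
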